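/- Let m = 2n be even and let X ∈ Mₘ(K̄) satisfy Xᵀ·S·X = S (so X ∈ O(m, K̄)). Assume that for every σ ∈ Gal(K̄/K) the matrix X⁻¹·σ(X) is diagonal. Then there exist Q ∈ Mₘ(K̄) with all entries in the image of K and with Qᵀ·S·Q = S, and a diagonal matrix D ∈ Mₘ(K̄) with Dᵀ·S·D = S, such that X = Q·D. (Triviality of the Belavin–Drinfeld cohomology H¹_BD(r_DJ) for o(2n).) -/

import Mathlib

open Matrix Polynomial

noncomputable section

/-- `K = ℂ((ℏ))`, the field of formal Laurent series over `ℂ`. -/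
abbrev K : Type := LaurentSeries ℂ

/-- A fixed algebraic closure of `K`. -/
abbrev Kbar : Type := AlgebraicClosure K

/-- The matrix `S` with 1's on the antidiagonal and 0 elsewhere
(`S_{i,k} = 1` iff `i + k = m + 1` in 1-based indexing). -/
def Smat (F : Type*) [Field F] (m : ℕ) : Matrix (Fin m) (Fin m) F :=
  Matrix.of fun i k => if (i : ℕ) + (k : ℕ) + 1 = m then 1 else 0

instance : CharZero K := charZero_of_injective_algebraMap (algebraMap ℂ K).injective

lemma fixed_mem_range (x : Kbar) (hx : ∀ σ : Kbar ≃ₐ[K] Kbar, σ x = x) :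
    x ∈ (algebraMap K Kbar).range := by
  classical
  have hint : IsIntegral K x := Algebra.IsIntegral.isIntegral x
  have hsep : (minpoly K x).Separable := (minpoly.irreducible hint).separable
  have hsplits : ((minpoly K x).map (algebraMap K Kbar)).Splits := IsAlgClosed.splits _
  have hroots : ∀ y ∈ ((minpoly K x).map (algebraMap K Kbar)).roots, y = x := by
    intro y hy
    have hy0 : aeval y (minpoly K x) = 0 := by
      rw [aeval_def, ← eval_map]
      exact (isRoot_of_mem_roots hy)
    obtain ⟨φ, hφ⟩ := IntermediateField.exists_algHom_of_splits_of_aeval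
      (fun a => ⟨Algebra.IsIntegral.isIntegral a, IsAlgClosed.splits _⟩) hy0
    have hb : Function.Bijective φ := Algebra.IsAlgebraic.algHom_bijective φ
    have := hx (AlgEquiv.ofBijective φ hb)
    rw [← hφ]; exact this
  have hnodup : ((minpoly K x).map (algebraMap K Kbar)).roots.Nodup :=
    nodup_roots (hsep.map)
  have hcard : (minpoly K x).natDegree =
      Multiset.card ((minpoly K x).map (algebraMap K Kbar)).roots :=
    by rw [← natDegree_map (algebraMap K Kbar)]; exact hsplits.natDegree_eq_card_roots
  have hle : Multiset.card ((minpoly K x).map (algebraMap K Kbar)).roots ≤ 1 := by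
    have hsub : ((minpoly K x).map (algebraMap K Kbar)).roots.toFinset ⊆ {x} := by
      intro y hy
      simp [hroots y (Multiset.mem_toFinset.mp hy)]
    calc Multiset.card ((minpoly K x).map (algebraMap K Kbar)).roots
        = ((minpoly K x).map (algebraMap K Kbar)).roots.toFinset.card :=
          (Multiset.toFinset_card_of_nodup hnodup).symm
      _ ≤ ({x} : Finset Kbar).card := Finset.card_le_card hsub
      _ = 1 := Finset.card_singleton x
  have hpos : 0 < (minpoly K x).natDegree := minpoly.natDegree_pos hint
  have hnd : (minpoly K x).natDegree = 1 := by omega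
  exact minpoly.mem_range_of_degree_eq_one K x
    (by rw [degree_eq_natDegree (minpoly.ne_zero hint), hnd]; rfl)

/-- the antidiagonal flip -/
def flipF {m : ℕ} (j : Fin m) : Fin m := ⟨m - 1 - (j : ℕ), by have := j.isLt; omega⟩

lemma flipF_val {m : ℕ} (j : Fin m) : (flipF j : ℕ) = m - 1 - (j : ℕ) := rfl

lemma flipF_flipF {m : ℕ} (j : Fin m) : flipF (flipF j) = j := by
  have := j.isLt; apply Fin.ext; rw [flipF_val, flipF_val]; omega

lemma Smat_apply_eq {F : Type*} [Field F] {m : ℕ} (i k : Fin m) :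
    Smat F m i k = if k = flipF i then 1 else 0 := by
  have hi := i.isLt; have hk := k.isLt
  have he : (i : ℕ) + (k : ℕ) + 1 = m ↔ k = flipF i := by
    rw [Fin.ext_iff, flipF_val]; omega
  simp only [Smat, Matrix.of_apply, he]

lemma Smat_flip {F : Type*} [Field F] {m : ℕ} (j : Fin m) :
    Smat F m j (flipF j) = 1 := by simp [Smat_apply_eq]

lemma diag_conj {m : ℕ} {D M : Matrix (Fin m) (Fin m) Kbar} (hD : D.IsDiag)
    (j k : Fin m) : (Dᵀ * M * D) j k = D j j * M j k * D k k := by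
  have h1 : ∀ l : Fin m, (M * D) l k = M l k * D k k := by
    intro l
    rw [mul_apply]
    rw [Finset.sum_eq_single k (fun b _ hb => by rw [hD hb, mul_zero]) (by simp)]
  rw [Matrix.mul_assoc, mul_apply]
  rw [Finset.sum_eq_single j (fun b _ hb => by simp [hD hb]) (by simp)]
  rw [transpose_apply, h1 j, mul_assoc]

set_option maxHeartbeats 1600000 in
/-- Triviality of the Belavin–Drinfeld cohomology `H¹_BD(r_DJ)` for `o(2n)`:
if `X ∈ O(2n, K̄)` and `X⁻¹·σ(X)` is diagonal for all `σ ∈ Gal(K̄/K)`, then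
`X = Q·D` with `Q ∈ O(2n, K)` and `D` diagonal orthogonal. -/
theorem statement7 (n : ℕ)
    (X : Matrix (Fin (2 * n)) (Fin (2 * n)) Kbar)
    (hX : Xᵀ * Smat Kbar (2 * n) * X = Smat Kbar (2 * n))
    (h : ∀ σ : Kbar ≃ₐ[K] Kbar, (X⁻¹ * X.map σ).IsDiag) :
    ∃ Q D : Matrix (Fin (2 * n)) (Fin (2 * n)) Kbar,
      (∀ i j, Q i j ∈ (algebraMap K Kbar).range) ∧
      Qᵀ * Smat Kbar (2 * n) * Q = Smat Kbar (2 * n) ∧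
      D.IsDiag ∧ Dᵀ * Smat Kbar (2 * n) * D = Smat Kbar (2 * n) ∧
      X = Q * D := by
  classical
  set S := Smat Kbar (2 * n) with hS
  -- S * S = 1
  have hSS : S * S = 1 := by
    ext i k
    rw [mul_apply]
    simp only [hS, Smat_apply_eq, ite_mul, one_mul, zero_mul]
    rw [Finset.sum_ite_eq' Finset.univ (flipF i) (fun j => if k = flipF j then (1:Kbar) else 0)]
    simp [flipF_flipF, one_apply, eq_comm]
  -- X is invertible
  have hleft : (S * Xᵀ * S) * X = 1 := by
    have h1 : S * (Xᵀ * S * X) = 1 := by rw [hX, hSS]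
    rw [← h1, Matrix.mul_assoc, Matrix.mul_assoc, Matrix.mul_assoc]
  haveI : Invertible X := invertibleOfLeftInverse X _ hleft
  have hXX : X * X⁻¹ = 1 := Matrix.mul_nonsing_inv X (isUnit_det_of_invertible X)
  have hXX' : X⁻¹ * X = 1 := Matrix.nonsing_inv_mul X (isUnit_det_of_invertible X)
  -- the cocycle
  set c : (Kbar ≃ₐ[K] Kbar) → Fin (2 * n) → Kbar := fun σ j => (X⁻¹ * X.map ⇑σ) j j with hc
  have hmapX : ∀ σ : Kbar ≃ₐ[K] Kbar, X.map ⇑σ = X * (X⁻¹ * X.map ⇑σ) := by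
    intro σ; rw [← Matrix.mul_assoc, hXX, Matrix.one_mul]
  have hA : ∀ (σ : Kbar ≃ₐ[K] Kbar) (i j : Fin (2 * n)), σ (X i j) = X i j * c σ j := by
    intro σ i j
    have h1 := congrFun (congrFun (hmapX σ) i) j
    have h2 : (X * (X⁻¹ * X.map ⇑σ)) i j = X i j * c σ j := by
      rw [mul_apply]
      rw [Finset.sum_eq_single j (fun b _ hb => by rw [h σ hb, mul_zero]) (by simp)]
    rw [← h2, ← h1]; rfl
  -- columns are nonzero
  have hcol : ∀ j : Fin (2 * n), ∃ i, X i j ≠ 0 := by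
    intro j
    by_contra hcon
    push_neg at hcon
    have h1 : (X⁻¹ * X) j j = 1 := by rw [hXX']; simp
    rw [mul_apply] at h1
    simp [hcon] at h1
  choose i0 hi0 using hcol
  set a : Fin (2 * n) → Kbar := fun j => X (i0 j) j with ha
  have hane : ∀ j, a j ≠ 0 := fun j => hi0 j
  have hac : ∀ (σ : Kbar ≃ₐ[K] Kbar) (j : Fin (2 * n)), σ (a j) = a j * c σ j :=
    fun σ j => hA σ (i0 j) j
  have hcne : ∀ (σ : Kbar ≃ₐ[K] Kbar) (j : Fin (2 * n)), c σ j ≠ 0 := by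
    intro σ j hc0
    have := hac σ j
    rw [hc0, mul_zero] at this
    exact hane j (by simpa using this)
  -- orthogonality of the cocycle
  have hB : ∀ (σ : Kbar ≃ₐ[K] Kbar) (j : Fin (2 * n)), c σ j * c σ (flipF j) = 1 := by
    intro σ j
    set D := X⁻¹ * X.map ⇑σ with hD
    have hmapmul : ∀ (A B : Matrix (Fin (2 * n)) (Fin (2 * n)) Kbar),
        (A * B).map ⇑σ = A.map ⇑σ * B.map ⇑σ := by
      intro A B; ext i j
      simp [Matrix.map_apply, Matrix.mul_apply, map_sum]
    have hmapT : ∀ (A : Matrix (Fin (2 * n)) (Fin (2 * n)) Kbar),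
        (Aᵀ).map ⇑σ = (A.map ⇑σ)ᵀ := by
      intro A; ext i j; simp [Matrix.map_apply]
    have hSfix : S.map ⇑σ = S := by
      ext i j; simp [hS, Smat, Matrix.map_apply, apply_ite]
    have e1 : (X.map ⇑σ)ᵀ * S * (X.map ⇑σ) = S := by
      have e0 : (Xᵀ * S * X).map ⇑σ = S := by rw [hX, hSfix]
      rw [hmapmul, hmapmul, hmapT, hSfix] at e0
      exact e0
    rw [hmapX σ, ← hD] at e1
    have e2 : Dᵀ * S * D = S := by
      rw [Matrix.transpose_mul] at e1
      calc Dᵀ * S * D = Dᵀ * (Xᵀ * S * X) * D := by rw [hX]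
        _ = (Dᵀ * Xᵀ) * S * (X * D) := by simp only [Matrix.mul_assoc]
        _ = S := by simpa only [Matrix.mul_assoc] using e1
    have e3 := congrFun (congrFun e2 j) (flipF j)
    rw [diag_conj (h σ) j (flipF j)] at e3
    rw [hS, Smat_flip] at e3
    have : c σ j * 1 * c σ (flipF j) = 1 := e3
    rwa [mul_one] at this
  -- the "norm" of a
  set e : Fin (2 * n) → Kbar := fun j => a j * a (flipF j) with he
  have hene : ∀ j, e j ≠ 0 := fun j => mul_ne_zero (hane j) (hane (flipF j))
  have hefix : ∀ (σ : Kbar ≃ₐ[K] Kbar) (j : Fin (2 * n)), σ (e j) = e j := by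
    intro σ j
    calc σ (e j) = σ (a j) * σ (a (flipF j)) := map_mul σ _ _
      _ = (a j * a (flipF j)) * (c σ j * c σ (flipF j)) := by rw [hac, hac]; ring
      _ = e j := by rw [hB σ j, mul_one, he]
  have hesymm : ∀ j, e (flipF j) = e j := by
    intro j; simp only [he]; rw [flipF_flipF]; ring
  -- flip has no fixed points
  have hflipne : ∀ j : Fin (2 * n), (j : ℕ) ≠ (flipF j : ℕ) := by
    intro j
    have := j.isLt
    rw [flipF_val]
    omega
  -- the diagonal entries
  set d : Fin (2 * n) → Kbar := fun j =>
    if (j : ℕ) < (flipF j : ℕ) then a j / e j else a j with hd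
  have hdne : ∀ j, d j ≠ 0 := by
    intro j
    show (if (j : ℕ) < (flipF j : ℕ) then a j / e j else a j) ≠ 0
    split
    · exact div_ne_zero (hane j) (hene j)
    · exact hane j
  have hd1 : ∀ j, d j * d (flipF j) = 1 := by
    intro j
    have hne := hflipne j
    have hff : flipF (flipF j) = j := flipF_flipF j
    by_cases hlt : (j : ℕ) < (flipF j : ℕ)
    · have h2 : ¬ ((flipF j : ℕ) < (flipF (flipF j) : ℕ)) := by rw [hff]; omega
      simp only [hd, if_pos hlt, if_neg h2]
      rw [div_mul_eq_mul_div, show a j * a (flipF j) = e j from rfl, div_self (hene j)]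
    · have h2 : (flipF j : ℕ) < (flipF (flipF j) : ℕ) := by rw [hff]; omega
      simp only [hd, if_neg hlt, if_pos h2]
      rw [mul_div_assoc']
      rw [show a j * a (flipF j) = e j from rfl, hesymm, div_self (hene j)]
  have hdc : ∀ (σ : Kbar ≃ₐ[K] Kbar) (j : Fin (2 * n)), σ (d j) = d j * c σ j := by
    intro σ j
    by_cases hlt : (j : ℕ) < (flipF j : ℕ)
    · simp only [hd, if_pos hlt]
      rw [map_div₀, hac, hefix, mul_div_right_comm]
    · simp only [hd, if_neg hlt]
      exact hac σ j
  -- construct Q and D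
  refine ⟨Matrix.of fun i j => X i j * (d j)⁻¹, Matrix.diagonal d, ?_, ?_, ?_, ?_, ?_⟩
  · -- entries of Q lie in K
    intro i j
    apply fixed_mem_range
    intro σ
    show σ (X i j * (d j)⁻¹) = X i j * (d j)⁻¹
    rw [_root_.map_mul, map_inv₀, hA, hdc, mul_inv,
      show X i j * c σ j * ((d j)⁻¹ * (c σ j)⁻¹)
        = X i j * (d j)⁻¹ * (c σ j * (c σ j)⁻¹) by ring,
      mul_inv_cancel₀ (hcne σ j), mul_one]
  · -- Q is orthogonal
    have hQ : (Matrix.of fun i j => X i j * (d j)⁻¹)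
        = X * Matrix.diagonal (fun j => (d j)⁻¹) := by
      ext i j; rw [Matrix.mul_diagonal]; rfl
    rw [hQ, Matrix.transpose_mul, Matrix.diagonal_transpose]
    have : Matrix.diagonal (fun j => (d j)⁻¹) * Xᵀ * S * (X * Matrix.diagonal fun j => (d j)⁻¹)
        = Matrix.diagonal (fun j => (d j)⁻¹) * S * Matrix.diagonal (fun j => (d j)⁻¹) := by
      calc Matrix.diagonal (fun j => (d j)⁻¹) * Xᵀ * S * (X * Matrix.diagonal fun j => (d j)⁻¹)
          = Matrix.diagonal (fun j => (d j)⁻¹) * (Xᵀ * S * X) * Matrix.diagonal (fun j => (d j)⁻¹) := by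
            simp only [Matrix.mul_assoc]
        _ = _ := by rw [hX]
    rw [this]
    ext i k
    rw [Matrix.mul_diagonal, Matrix.diagonal_mul, hS, Smat_apply_eq]
    by_cases hk : k = flipF i
    · rw [if_pos hk, hk, mul_one, ← mul_inv, hd1 i, inv_one]
    · rw [if_neg hk, mul_zero, zero_mul]
  · exact Matrix.isDiag_diagonal d
  · -- D is orthogonal
    rw [Matrix.diagonal_transpose]
    ext i k
    rw [Matrix.mul_diagonal, Matrix.diagonal_mul, hS, Smat_apply_eq]
    by_cases hk : k = flipF i
    · rw [if_pos hk, hk, mul_one, hd1 i]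
    · rw [if_neg hk, mul_zero, zero_mul]
  · -- X = Q * D
    ext i j
    rw [Matrix.mul_diagonal, Matrix.of_apply, mul_assoc, inv_mul_cancel₀ (hdne j), mul_one]
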